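/- Let β₂ ∈ (0,1), let C ∈ ℕ satisfy 5·β₂^(C−2) ≤ (1−β₂)/(4−β₂), and let α > 0. Consider the Adam iteration with β₁ = 0 on F = [−2,2] starting at x₁ = 0, m₀ = v₀ = 0, with gradients g_t given by: g_t = −1 if 0 ≤ x_t ≤ 1 and t mod C = 1; g_t = 2 if 0 ≤ x_t ≤ 1 and t mod C = 2; g_t = 0 otherwise; updates v_t = β₂·v_{t−1} + (1−β₂)·g_t² and x_{t+1} = proj_{[−2,2]}(x_t − (α/√t)·g_t/√v_t) (the step being 0 when g_t = 0). Then x_t ≥ 0 for all t ∈ ℕ. -/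
import Mathlib

set_option maxHeartbeats 1600000


/-- The iterates of Adam with `β₁ = 0` on the `C`-periodic gradient sequence over
`F = [-2,2]` starting at `x₁ = 0` stay nonnegative: `x_t ≥ 0` for all `t`. -/
theorem adam_iterates_nonneg
    (beta2 : ℝ) (hb20 : 0 < beta2) (hb21 : beta2 < 1)
    (C : ℕ) (hC : 5 * beta2 ^ (C - 2) ≤ (1 - beta2) / (4 - beta2))
    (alpha : ℝ) (halpha : 0 < alpha)
    (x v g : ℕ → ℝ)
    (hx1 : x 1 = 0) (hv0 : v 0 = 0)
    -- gradients: `g t = -1` if `0 ≤ x t ≤ 1` and `t % C = 1`; `g t = 2` if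
    -- `0 ≤ x t ≤ 1` and `t % C = 2`; `g t = 0` otherwise
    (hg : ∀ t, 1 ≤ t → g t =
      if 0 ≤ x t ∧ x t ≤ 1 then
        (if t % C = 1 then -1 else if t % C = 2 then 2 else 0)
      else 0)
    -- second moment update
    (hv : ∀ t, 1 ≤ t → v t = beta2 * v (t - 1) + (1 - beta2) * g t ^ 2)
    -- projected update with step size `α/√t` (the step vanishes when `g t = 0`)
    (hx : ∀ t, 1 ≤ t → x (t + 1) =
      max (-2) (min 2 (x t - (alpha / Real.sqrt t) * g t / Real.sqrt (v t)))) :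
    ∀ t, 1 ≤ t → 0 ≤ x t := by
  have h4b : (0:ℝ) < 4 - beta2 := by linarith
  have hC3 : 3 ≤ C := by
    by_contra h
    push_neg at h
    have h2 : C - 2 = 0 := by omega
    rw [h2, pow_zero, mul_one, le_div_iff₀ h4b] at hC
    linarith
  -- bounds on v
  have hvb : ∀ t, 0 ≤ v t ∧ v t ≤ 4 := by
    intro t
    induction t with
    | zero => rw [hv0]; norm_num
    | succ n ih =>
      have h1 : 1 ≤ n + 1 := by omega
      have hg2 : 0 ≤ g (n+1) ^ 2 ∧ g (n+1) ^ 2 ≤ 4 := by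
        rw [hg (n+1) h1]; split_ifs <;> norm_num
      rw [hv (n+1) h1]
      simp only [Nat.add_sub_cancel]
      constructor <;> nlinarith [ih.1, ih.2, hg2.1, hg2.2]
  -- decay lemma
  have hdecay : ∀ s, 1 ≤ s → s % C = 1 → v (s - 1) ≤ 4 * beta2 ^ (C - 2) := by
    intro s hs1 hsmod
    rcases eq_or_lt_of_le hs1 with h | h
    · rw [← h]
      simp only [Nat.sub_self, hv0]
      positivity
    · have hs2 : 2 ≤ s := h
      set q := s / C with hqdef
      have hq : C * q + 1 = s := by
        have h2 := Nat.div_add_mod s C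
        rw [← hqdef] at h2
        omega
      have hq1 : 1 ≤ q := by
        rcases Nat.eq_zero_or_pos q with h0 | h0
        · rw [h0, Nat.mul_zero] at hq; omega
        · exact h0
      have hCq : C ≤ C * q := by
        have := Nat.mul_le_mul_left C hq1
        omega
      have key : ∀ k, k ≤ C - 2 → v (s - 1) ≤ beta2 ^ k * v (s - 1 - k) := by
        intro k
        induction k with
        | zero => intro _; simp
        | succ n ih =>
          intro hk
          have ihn := ih (by omega)
          set m := s - 1 - n with hm
          have hm1 : 1 ≤ m := by omega
          have hmod : m % C ≠ 1 ∧ m % C ≠ 2 := by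
            rcases Nat.eq_zero_or_pos n with h0 | h0
            · have hmeq : m = C * q := by omega
              rw [hmeq, Nat.mul_mod_right]
              omega
            · have hqq : C * q = C * (q - 1) + C := by
                nth_rewrite 1 [show q = q - 1 + 1 by omega]
                ring
              have hmeq : m = C * (q - 1) + (C - n) := by omega
              have hmm : m % C = (C - n) % C := by rw [hmeq, Nat.mul_add_mod]
              rw [hmm, Nat.mod_eq_of_lt (by omega)]
              omega
          have hg0 : g m = 0 := by
            rw [hg m hm1]
            simp [hmod.1, hmod.2]
          have hvm : v m = beta2 * v (m - 1) := by
            rw [hv m hm1, hg0]; ring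
          have hsub : m - 1 = s - 1 - (n + 1) := by omega
          calc v (s-1) ≤ beta2 ^ n * v m := ihn
            _ = beta2 ^ (n+1) * v (s - 1 - (n+1)) := by
                rw [hvm, ← hsub, pow_succ]; ring
      calc v (s - 1) ≤ beta2 ^ (C-2) * v (s - 1 - (C-2)) := key (C-2) le_rfl
        _ ≤ beta2 ^ (C-2) * 4 :=
            mul_le_mul_of_nonneg_left (hvb _).2 (by positivity)
        _ = 4 * beta2 ^ (C-2) := by ring
  -- main strong induction
  intro t
  induction t using Nat.strong_induction_on with
  | _ t IH =>
  intro ht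
  rcases eq_or_lt_of_le ht with h | h
  · rw [← h, hx1]
  · -- t ≥ 2
    set u := t - 1 with hu
    have hu1 : 1 ≤ u := by omega
    have htu : t = u + 1 := by omega
    have hxu : 0 ≤ x u := IH u (by omega) hu1
    rw [htu, hx u hu1]
    have hmax : ∀ a : ℝ, 0 ≤ a → (0:ℝ) ≤ max (-2) (min 2 a) := fun a ha =>
      le_max_of_le_right (le_min (by norm_num) ha)
    by_cases hP : x u ≤ 1
    · by_cases h1 : u % C = 1
      · -- g u = -1, step is nonnegative
        have hgu : g u = -1 := by rw [hg u hu1, if_pos ⟨hxu, hP⟩, if_pos h1]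
        apply hmax
        rw [hgu]
        have he : x u - alpha / Real.sqrt u * (-1) / Real.sqrt (v u)
            = x u + alpha / Real.sqrt u / Real.sqrt (v u) := by ring
        rw [he]
        have : 0 ≤ alpha / Real.sqrt u / Real.sqrt (v u) := by positivity
        linarith
      · by_cases h2 : u % C = 2
        · -- g u = 2 : the hard case
          have hgu : g u = 2 := by
            rw [hg u hu1, if_pos ⟨hxu, hP⟩, if_neg h1, if_pos h2]
          have hu2 : 2 ≤ u := by
            have := Nat.mod_le u C; omega
          set s := u - 1 with hs
          have hs1 : 1 ≤ s := by omega
          have hus : u = s + 1 := by omega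
          have hqs : C * (u / C) + 2 = u := by
            have := Nat.div_add_mod u C; omega
          have hsmod : s % C = 1 := by
            have hseq : s = 1 + C * (u / C) := by omega
            rw [hseq, Nat.add_mul_mod_self_left, Nat.mod_eq_of_lt (by omega)]
          have hxs : 0 ≤ x s := IH s (by omega) hs1
          have hxu_eq := hx s hs1
          rw [← hus] at hxu_eq
          by_cases hxs1 : x s ≤ 1
          · have hgs : g s = -1 := by
              rw [hg s hs1, if_pos ⟨hxs, hxs1⟩, if_pos hsmod]
            have hvs : v s = beta2 * v (s-1) + (1 - beta2) := by
              rw [hv s hs1, hgs]; ring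
            have hvs0 : 1 - beta2 ≤ v s := by
              nlinarith [(hvb (s-1)).1]
            have hvspos : 0 < v s := by linarith
            have hdec := hdecay s hs1 hsmod
            have hCq5 : 5 * (beta2 ^ (C-2) * (4 - beta2)) ≤ 1 - beta2 := by
              rw [le_div_iff₀ h4b] at hC; linarith
            have hbpow : (0:ℝ) ≤ beta2 ^ (C-2) := by positivity
            have hvsle : v s * (4 - beta2) ≤ 4 * (1 - beta2) := by
              have e1 : v s ≤ beta2 * (4 * beta2 ^ (C-2)) + (1 - beta2) := by
                nlinarith
              nlinarith [mul_le_mul_of_nonneg_right e1 h4b.le,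
                mul_le_mul_of_nonneg_left hCq5 (by positivity : (0:ℝ) ≤ 4 * beta2),
                mul_nonneg (by linarith : (0:ℝ) ≤ 1 - beta2) hb20.le]
            have hvu : v u = beta2 * v s + (1 - beta2) * 4 := by
              rw [hv u hu1, hgu, ← hs]; ring
            have hvu4 : 4 * v s ≤ v u := by nlinarith
            have hvupos : 0 < v u := by nlinarith
            have hspos : (0:ℝ) < Real.sqrt s :=
              Real.sqrt_pos.mpr (by exact_mod_cast Nat.pos_of_ne_zero (by omega))
            have hupos : (0:ℝ) < Real.sqrt u :=
              Real.sqrt_pos.mpr (by exact_mod_cast Nat.pos_of_ne_zero (by omega))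
            have hsvpos : 0 < Real.sqrt (v s) := Real.sqrt_pos.mpr hvspos
            have huvpos : 0 < Real.sqrt (v u) := Real.sqrt_pos.mpr hvupos
            set inc := alpha / Real.sqrt s / Real.sqrt (v s) with hinc
            have hincpos : 0 < inc := by positivity
            have hinner : x s - alpha / Real.sqrt s * g s / Real.sqrt (v s)
                = x s + inc := by rw [hgs, hinc]; ring
            rw [hinner] at hxu_eq
            have hxueq : x u = x s + inc := by
              rcases le_or_gt (x s + inc) 2 with hle | hlt
              · rw [hxu_eq, min_eq_right hle, max_eq_right (by linarith)]
              · exfalso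
                rw [hxu_eq, min_eq_left (by linarith),
                    max_eq_right (by norm_num)] at hP
                linarith
            have hSle : Real.sqrt s ≤ Real.sqrt u := by
              apply Real.sqrt_le_sqrt
              exact_mod_cast (by omega : s ≤ u)
            have hSvle : 2 * Real.sqrt (v s) ≤ Real.sqrt (v u) := by
              have h4 : Real.sqrt (4 * v s) = 2 * Real.sqrt (v s) := by
                rw [Real.sqrt_mul (by norm_num), show (4:ℝ) = 2^2 by norm_num,
                    Real.sqrt_sq (by norm_num)]
              rw [← h4]
              exact Real.sqrt_le_sqrt hvu4
            apply hmax
            rw [hgu]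
            have hgoal : alpha / Real.sqrt u * 2 / Real.sqrt (v u) ≤ inc := by
              rw [hinc, div_mul_eq_mul_div, div_div, div_div,
                  div_le_div_iff₀ (by positivity) (by positivity)]
              nlinarith [mul_le_mul hSle hSvle (by positivity) hupos.le]
            linarith
          · -- x s > 1 : then x u > 1, contradiction
            exfalso
            push_neg at hxs1
            have hgs : g s = 0 := by
              rw [hg s hs1, if_neg (by push_neg; intro _; linarith)]
            rw [hgs] at hxu_eq
            have hxu2 : x u = max (-2) (min 2 (x s)) := by
              rw [hxu_eq]; norm_num
            have h1u : (1:ℝ) < x u := by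
              rw [hxu2]
              rcases le_or_gt (x s) 2 with hh | hh
              · rw [min_eq_right hh, max_eq_right (by linarith)]; linarith
              · rw [min_eq_left (by linarith), max_eq_right (by norm_num)]
                norm_num
            linarith
        · have hgu : g u = 0 := by
            rw [hg u hu1, if_pos ⟨hxu, hP⟩, if_neg h1, if_neg h2]
          apply hmax
          rw [hgu]
          simpa using hxu
    · have hgu : g u = 0 := by
        rw [hg u hu1, if_neg (by push_neg; intro _; linarith)]
      apply hmax
      rw [hgu]
      simpa using hxu
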